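/- arXiv:2505.21386 — 5 statements merged into one kernel-verified Lean document; each statement's English description precedes it below -/
import Mathlib

section
/- Consider the reduced system x^{t+1} = xᵗ + δ(P_X[xᵗ − γ F(xᵗ)] − xᵗ). Then there exist a continuous function V : ℝⁿ → ℝ and constants δ̄₂, γ̄ > 0 such that for any δ ∈ (0, δ̄₂) and γ ∈ (0, γ̄) there are c₁, c₂, c₃, c₄ > 0 with, for all x, x₁, x₂ ∈ X: (i) c₁‖x − x⋆‖² ≤ V(x) ≤ c₂‖x − x⋆‖²; (ii) V(x + δ(P_X[x − γF(x)] − x)) − V(x) ≤ −δ c₃‖x − x⋆‖²; (iii) |V(x₁) − V(x₂)| ≤ c₄‖x₁ − x₂‖‖x₁ − x⋆‖ + c₄‖x₁ − x₂‖‖x₂ − x⋆‖, where x⋆ is the unique Nash equilibrium. -/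
open Finset RealInnerProductSpace

set_option maxHeartbeats 800000

noncomputable section

/-- Lyapunov function for the reduced system
`x^{t+1} = xᵗ + δ(P_X[xᵗ − γF(xᵗ)] − xᵗ)`, where `x⋆` is the unique Nash equilibrium
(characterized by `x⋆ = P_X[x⋆ − γF(x⋆)]` for every `γ > 0`). -/
theorem reduced_system_lyapunov
    (nn : ℕ)
    (X : Set (EuclideanSpace ℝ (Fin nn)))
    (hXne : X.Nonempty) (hXcl : IsClosed X) (hXcv : Convex ℝ X)
    (F : EuclideanSpace ℝ (Fin nn) → EuclideanSpace ℝ (Fin nn))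
    (μ L : ℝ) (hμ : 0 < μ) (hL : 0 < L)
    -- `F` is `μ`-strongly monotone and `L`-Lipschitz continuous
    (hmono : ∀ x y : EuclideanSpace ℝ (Fin nn), μ * ‖x - y‖ ^ 2 ≤ ⟪F x - F y, x - y⟫)
    (hFlip : ∀ x y : EuclideanSpace ℝ (Fin nn), ‖F x - F y‖ ≤ L * ‖x - y‖)
    -- `proj` is the Euclidean projection onto `X`
    (proj : EuclideanSpace ℝ (Fin nn) → EuclideanSpace ℝ (Fin nn))
    (hproj : ∀ v, proj v ∈ X ∧ ∀ y ∈ X, ‖v - proj v‖ ≤ ‖v - y‖)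
    -- the unique Nash equilibrium and its fixed-point characterization
    (xstar : EuclideanSpace ℝ (Fin nn))
    (hxstarX : xstar ∈ X)
    (hfix : ∀ γ : ℝ, 0 < γ → proj (xstar - γ • F xstar) = xstar) :
    ∃ V : EuclideanSpace ℝ (Fin nn) → ℝ, Continuous V ∧
      ∃ δbar2 γbar : ℝ, 0 < δbar2 ∧ 0 < γbar ∧
        ∀ δ γ : ℝ, 0 < δ → δ < δbar2 → 0 < γ → γ < γbar →
          ∃ c1 c2 c3 c4 : ℝ, 0 < c1 ∧ 0 < c2 ∧ 0 < c3 ∧ 0 < c4 ∧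
            (∀ x ∈ X, c1 * ‖x - xstar‖ ^ 2 ≤ V x ∧ V x ≤ c2 * ‖x - xstar‖ ^ 2) ∧
            (∀ x ∈ X, V (x + δ • (proj (x - γ • F x) - x)) - V x ≤
              -(δ * c3) * ‖x - xstar‖ ^ 2) ∧
            (∀ x1 ∈ X, ∀ x2 ∈ X, |V x1 - V x2| ≤
              c4 * ‖x1 - x2‖ * ‖x1 - xstar‖ + c4 * ‖x1 - x2‖ * ‖x2 - xstar‖) := by
  -- variational inequality for the projection
  have hVI : ∀ v, ∀ y ∈ X, ⟪v - proj v, y - proj v⟫ ≤ 0 := by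
    intro v y hy
    have hp := hproj v
    have hinf : ‖v - proj v‖ = ⨅ w : X, ‖v - w‖ := by
      haveI : Nonempty X := ⟨⟨proj v, hp.1⟩⟩
      have hbdd : BddBelow (Set.range fun w : X => ‖v - (w : EuclideanSpace ℝ (Fin nn))‖) := by
        refine ⟨0, ?_⟩
        rintro _ ⟨w, rfl⟩
        exact norm_nonneg _
      refine le_antisymm (le_ciInf fun w => hp.2 w.1 w.2) ?_
      exact ciInf_le hbdd (⟨proj v, hp.1⟩ : X)
    exact (norm_eq_iInf_iff_real_inner_le_zero hXcv hp.1).1 hinf y hy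
  refine ⟨fun x => ‖x - xstar‖ ^ 2, by continuity, 1, min (μ / L ^ 2) (1 / (2 * μ)),
    one_pos, lt_min (by positivity) (by positivity), ?_⟩
  intro δ γ hδ hδ1 hγ hγbar
  have hγμ : γ * μ < 1 := by
    have := lt_of_lt_of_le hγbar (min_le_right _ _)
    calc γ * μ < (1 / (2 * μ)) * μ := by nlinarith
    _ ≤ 1 := by rw [div_mul_eq_mul_div]; rw [div_le_one (by positivity)]; nlinarith
  refine ⟨1, 1, γ * μ, 2, one_pos, one_pos, by positivity, two_pos, fun x _ => ⟨by simp, by simp⟩, ?_, ?_⟩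
  · intro x hx
    set T := proj (x - γ • F x) with hT
    -- contraction estimate ‖T - xstar‖² ≤ (1 - γμ)‖x - xstar‖²
    have hcontr : ‖T - xstar‖ ^ 2 ≤ (1 - γ * μ) * ‖x - xstar‖ ^ 2 := by
      have h1 := hVI (x - γ • F x) xstar hxstarX
      have h2 := hVI (xstar - γ • F xstar) T (hproj (x - γ • F x)).1
      rw [hfix γ hγ] at h2
      set a := x - xstar - γ • (F x - F xstar) with ha
      set b := T - xstar with hb
      have h1' : ⟪a - b - γ • F xstar, -b⟫ ≤ 0 := by
        rw [show a - b - γ • F xstar = x - γ • F x - T by rw [ha, hb]; module,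
            show -b = xstar - T by rw [hb]; module]
        exact h1
      have h2' : ⟪γ • F xstar, -b⟫ ≤ 0 := by
        rw [show (γ • F xstar : EuclideanSpace ℝ (Fin nn)) =
              -(xstar - γ • F xstar - xstar) by module,
            show -b = -(T - xstar) from rfl, inner_neg_neg]
        exact h2
      have key : ‖b‖ ^ 2 ≤ ⟪a, b⟫ := by
        have hsum := add_nonpos h1' h2'
        rw [← inner_add_left, show a - b - γ • F xstar + γ • F xstar = a - b by module,
          inner_neg_right, inner_sub_left] at hsum
        have hbb := real_inner_self_eq_norm_sq b
        linarith
      have hnorm : ⟪a, b⟫ ≤ ‖a‖ * ‖b‖ := real_inner_le_norm _ _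
      have hsq : ‖a‖ ^ 2 ≤ (1 - γ * μ) * ‖x - xstar‖ ^ 2 := by
        have expand : ‖a‖ ^ 2 =
            ‖x - xstar‖ ^ 2 - 2 * γ * ⟪F x - F xstar, x - xstar⟫
              + γ ^ 2 * ‖F x - F xstar‖ ^ 2 := by
          rw [ha, norm_sub_sq_real, norm_smul, real_inner_smul_right, real_inner_comm]
          simp [abs_of_pos hγ, Real.norm_eq_abs]; ring
        have hm := hmono x xstar
        have hl := hFlip x xstar
        have hl2 : ‖F x - F xstar‖ ^ 2 ≤ L ^ 2 * ‖x - xstar‖ ^ 2 := by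
          nlinarith [norm_nonneg (F x - F xstar), norm_nonneg (x - xstar)]
        have hγL : γ * L ^ 2 ≤ μ := by
          have := lt_of_lt_of_le hγbar (min_le_left _ _)
          rw [lt_div_iff₀ (by positivity)] at this
          linarith
        have k1 : γ * (γ * L ^ 2) ≤ γ * μ := mul_le_mul_of_nonneg_left hγL hγ.le
        have k2 : γ ^ 2 * ‖F x - F xstar‖ ^ 2 ≤ γ ^ 2 * (L ^ 2 * ‖x - xstar‖ ^ 2) :=
          mul_le_mul_of_nonneg_left hl2 (sq_nonneg γ)
        have k3 : 2 * γ * (μ * ‖x - xstar‖ ^ 2) ≤ 2 * γ * ⟪F x - F xstar, x - xstar⟫ :=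
          mul_le_mul_of_nonneg_left hm (by positivity)
        nlinarith [sq_nonneg ‖x - xstar‖]
      have : ‖T - xstar‖ ^ 2 = ‖b‖ ^ 2 := by rw [hb]
      rw [this]
      nlinarith [norm_nonneg b, norm_nonneg a, sq_nonneg (‖b‖ - ‖a‖)]
    -- convexity of ‖·‖²
    have hrw : x + δ • (T - x) - xstar = (1 - δ) • (x - xstar) + δ • (T - xstar) := by module
    have hconv : ‖(1 - δ) • (x - xstar) + δ • (T - xstar)‖ ^ 2 ≤
        (1 - δ) * ‖x - xstar‖ ^ 2 + δ * ‖T - xstar‖ ^ 2 := by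
      have hab := real_inner_le_norm (x - xstar) (T - xstar)
      have expand : ‖(1 - δ) • (x - xstar) + δ • (T - xstar)‖ ^ 2 =
          (1 - δ) ^ 2 * ‖x - xstar‖ ^ 2 + 2 * ((1 - δ) * δ) * ⟪x - xstar, T - xstar⟫
            + δ ^ 2 * ‖T - xstar‖ ^ 2 := by
        rw [norm_add_sq_real, norm_smul, norm_smul, real_inner_smul_left,
          real_inner_smul_right]
        simp only [Real.norm_eq_abs]
        rw [abs_of_nonneg (by linarith : (0:ℝ) ≤ 1 - δ), abs_of_pos hδ]
        ring
      rw [expand]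
      nlinarith [sq_nonneg (‖x - xstar‖ - ‖T - xstar‖), norm_nonneg (x - xstar),
        norm_nonneg (T - xstar), mul_pos hδ (by linarith : (0:ℝ) < 1 - δ)]
    calc ‖x + δ • (T - x) - xstar‖ ^ 2 - ‖x - xstar‖ ^ 2
        ≤ (1 - δ) * ‖x - xstar‖ ^ 2 + δ * ‖T - xstar‖ ^ 2 - ‖x - xstar‖ ^ 2 := by
          rw [hrw]; linarith [hconv]
      _ ≤ -(δ * (γ * μ)) * ‖x - xstar‖ ^ 2 := by nlinarith
  · intro x1 _ x2 _
    have h1 : ‖x1 - xstar‖ ^ 2 - ‖x2 - xstar‖ ^ 2 =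
        (‖x1 - xstar‖ - ‖x2 - xstar‖) * (‖x1 - xstar‖ + ‖x2 - xstar‖) := by ring
    have h2 : |‖x1 - xstar‖ - ‖x2 - xstar‖| ≤ ‖x1 - x2‖ := by
      have := abs_norm_sub_norm_le (x1 - xstar) (x2 - xstar)
      simpa [sub_sub_sub_cancel_right] using this
    calc |‖x1 - xstar‖ ^ 2 - ‖x2 - xstar‖ ^ 2|
        = |‖x1 - xstar‖ - ‖x2 - xstar‖| * |‖x1 - xstar‖ + ‖x2 - xstar‖| := by
          rw [h1, abs_mul]
      _ ≤ ‖x1 - x2‖ * (‖x1 - xstar‖ + ‖x2 - xstar‖) := by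
          apply mul_le_mul h2 (le_of_eq (abs_of_nonneg (by positivity))) (abs_nonneg _)
            (norm_nonneg _)
      _ ≤ 2 * ‖x1 - x2‖ * ‖x1 - xstar‖ + 2 * ‖x1 - x2‖ * ‖x2 - xstar‖ := by
          nlinarith [norm_nonneg (x1 - x2), norm_nonneg (x1 - xstar), norm_nonneg (x2 - xstar)]
end
end

section
/- The matrix R_dᵀ W_d R_d ∈ ℝ^{(N−1)d×(N−1)d} is Schur stable, i.e., every eigenvalue of R_dᵀ W_d R_d has modulus strictly less than 1. -/
open Matrix Finset

noncomputable section

/-- The Kronecker product `W ⊗ I_d`. -/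
def kronId {N : ℕ} (W : Matrix (Fin N) (Fin N) ℝ) (d : ℕ) :
    Matrix (Fin N × Fin d) (Fin N × Fin d) ℝ :=
  Matrix.of fun p q => if p.2 = q.2 then W p.1 q.1 else 0

/-- The matrix `1_{N,d} = 1_N ⊗ I_d`. -/
def onesNd (N d : ℕ) : Matrix (Fin N × Fin d) (Fin d) ℝ :=
  Matrix.of fun p j => if p.2 = j then (1 : ℝ) else 0

lemma strict_convex_disk {n : ℕ} (c : Fin n → ℝ) (z : Fin n → ℂ) (w : ℂ)
    (hc : ∀ j, 0 ≤ c j) (hsum : ∑ j, c j = 1)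
    (hz : ∀ j, ‖z j‖ ≤ ‖w‖)
    (heq : ∑ j, (c j : ℂ) * z j = w) (hw : w ≠ 0) :
    ∀ j, 0 < c j → z j = w := by
  set r := ‖w‖ with hr
  have hr0 : 0 < r := by simpa [hr] using (norm_pos_iff.mpr hw)
  -- each term bound
  have key : ∀ j, ((starRingEnd ℂ) w * z j).re ≤ r ^ 2 := by
    intro j
    calc ((starRingEnd ℂ) w * z j).re ≤ ‖(starRingEnd ℂ) w * z j‖ :=
          Complex.re_le_norm _
      _ = r * ‖z j‖ := by rw [norm_mul, Complex.norm_conj]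
      _ ≤ r * r := by nlinarith [hz j]
      _ = r ^ 2 := by ring
  -- sum equality
  have hsum2 : ∑ j, c j * ((starRingEnd ℂ) w * z j).re = r ^ 2 := by
    have h1 : ∑ j, c j * ((starRingEnd ℂ) w * z j).re
        = (∑ j, ((c j : ℂ) * ((starRingEnd ℂ) w * z j))).re := by
      rw [Complex.re_sum]
      exact Finset.sum_congr rfl fun j _ => by rw [Complex.re_ofReal_mul]
    have h2 : ∑ j, ((c j : ℂ) * ((starRingEnd ℂ) w * z j))
        = (starRingEnd ℂ) w * ∑ j, (c j : ℂ) * z j := by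
      rw [Finset.mul_sum]; exact Finset.sum_congr rfl fun j _ => by ring
    rw [h1, h2, heq, Complex.conj_mul']
    simp [← Complex.ofReal_pow, hr]
  -- equality for each j with positive weight
  have keq : ∀ j, 0 < c j → ((starRingEnd ℂ) w * z j).re = r ^ 2 := by
    intro j hj
    by_contra hne
    have hlt : ((starRingEnd ℂ) w * z j).re < r ^ 2 := lt_of_le_of_ne (key j) hne
    have : ∑ i, c i * ((starRingEnd ℂ) w * z i).re < ∑ i, c i * r ^ 2 := by
      apply Finset.sum_lt_sum
      · intro i _
        exact mul_le_mul_of_nonneg_left (key i) (hc i)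
      · exact ⟨j, Finset.mem_univ j, by nlinarith⟩
    rw [hsum2, ← Finset.sum_mul, hsum, one_mul] at this
    exact lt_irrefl _ this
  intro j hj
  have hre := keq j hj
  set u := (starRingEnd ℂ) w * z j with hu
  have habs : ‖u‖ ≤ r ^ 2 := by
    rw [hu, norm_mul, Complex.norm_conj]
    nlinarith [hz j]
  have habs' : ‖u‖ = r ^ 2 :=
    le_antisymm habs (by rw [← hre]; exact Complex.re_le_norm u)
  have him : u.im = 0 := by
    have := Complex.sq_norm u
    rw [habs'] at this
    have hnsq : Complex.normSq u = u.re * u.re + u.im * u.im := rfl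
    nlinarith [this, hre]
  have huval : u = ((r ^ 2 : ℝ) : ℂ) := by
    apply Complex.ext
    · rw [Complex.ofReal_re]; exact hre
    · rw [Complex.ofReal_im]; exact him
  -- conclude z j = w
  have hcw : (starRingEnd ℂ) w * w = ((r ^ 2 : ℝ) : ℂ) := by
    rw [Complex.conj_mul']
    simp [← Complex.ofReal_pow, hr]
  have : (starRingEnd ℂ) w * z j = (starRingEnd ℂ) w * w := by rw [← hu, huval, hcw]
  exact mul_left_cancel₀ (by simpa using hw) this

lemma stoch_eig {N : ℕ} (hN : 2 ≤ N) (W : Matrix (Fin N) (Fin N) ℝ)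
    (hWnonneg : ∀ i j, 0 ≤ W i j)
    (hWself : ∀ i, 0 < W i i)
    (hWconn : ∀ i j : Fin N, Relation.TransGen (fun a b => 0 < W b a) i j)
    (hWrow : ∀ i, ∑ j, W i j = 1)
    (μ : ℂ) (y : Fin N → ℂ) (hy : y ≠ 0)
    (heig : ∀ i, ∑ j, (W i j : ℂ) * y j = μ * y i)
    (hsum0 : ∑ i, y i = 0) :
    ‖μ‖ < 1 := by
  have hNpos : 0 < N := by omega
  -- maximizer
  obtain ⟨i0, -, hi0⟩ := Finset.exists_max_image (Finset.univ : Finset (Fin N))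
    (fun i => ‖y i‖) ⟨⟨0, hNpos⟩, Finset.mem_univ _⟩
  set m := ‖y i0‖ with hm
  have hmax : ∀ j, ‖y j‖ ≤ m := fun j => hi0 j (Finset.mem_univ j)
  have hm0 : 0 < m := by
    rcases Function.ne_iff.mp hy with ⟨p, hp⟩
    exact lt_of_lt_of_le (norm_pos_iff.mpr hp) (hmax p)
  by_contra hcon
  push_neg at hcon
  -- |μ| ≤ 1
  have hle : ‖μ‖ ≤ 1 := by
    have h1 : ‖μ * y i0‖ ≤ m := by
      rw [← heig i0]
      calc ‖∑ j, (W i0 j : ℂ) * y j‖ ≤ ∑ j, ‖(W i0 j : ℂ) * y j‖ :=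
            norm_sum_le _ _
        _ ≤ ∑ j, W i0 j * m := by
            apply Finset.sum_le_sum
            intro j _
            rw [norm_mul, Complex.norm_real, Real.norm_of_nonneg (hWnonneg i0 j)]
            exact mul_le_mul_of_nonneg_left (hmax j) (hWnonneg i0 j)
        _ = m := by rw [← Finset.sum_mul, hWrow, one_mul]
    rw [norm_mul] at h1
    nlinarith [h1, hm0, norm_nonneg μ]
  have habs1 : ‖μ‖ = 1 := le_antisymm hle hcon
  -- main step using strict convexity
  have step : ∀ i, ‖y i‖ = m → ∀ j, 0 < W i j →
      y j = μ * y i ∧ ‖y j‖ = m := by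
    intro i hi j hj
    have hwne : μ * y i ≠ 0 := by
      apply mul_ne_zero
      · intro h; rw [h] at habs1; simp at habs1
      · intro h; rw [h] at hi; simp at hi; linarith
    have habsw : ‖μ * y i‖ = m := by rw [norm_mul, habs1, one_mul, hi]
    have := strict_convex_disk (W i) y (μ * y i) (hWnonneg i) (hWrow i)
      (fun k => by rw [habsw]; exact hmax k) (heig i) hwne j hj
    exact ⟨this, by rw [this, habsw]⟩
  -- all coordinates have modulus m
  have allm : ∀ j, ‖y j‖ = m := by
    intro j
    have h := hWconn j i0
    induction h using Relation.TransGen.head_induction_on with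
    | single hab => exact (step i0 rfl _ hab).2
    | head hab _ ih => exact (step _ ih _ hab).2
  -- μ = 1
  have hmu1 : μ = 1 := by
    have h := (step i0 rfl i0 (hWself i0)).1
    have hyne : y i0 ≠ 0 := fun h' => by simp [hm, h'] at hm0
    have h2 : (μ - 1) * y i0 = 0 := by linear_combination -h
    rcases mul_eq_zero.mp h2 with h' | h'
    · exact sub_eq_zero.mp h'
    · exact absurd h' hyne
  -- y constant
  have hconst : ∀ j, y j = y i0 := by
    intro j
    have h := hWconn j i0
    induction h using Relation.TransGen.head_induction_on with
    | single hab => rw [(step i0 rfl _ hab).1, hmu1, one_mul]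
    | head hab _ ih => rw [(step _ (allm _) _ hab).1, hmu1, one_mul, ih]
  -- contradiction with sum zero
  have : (N : ℂ) * y i0 = 0 := by
    rw [← hsum0]
    rw [Finset.sum_congr rfl (fun j _ => hconst j)]
    simp [mul_comm]
  have hyne : y i0 ≠ 0 := fun h' => by simp [hm, h'] at hm0
  rcases mul_eq_zero.mp this with h' | h'
  · simp at h'; omega
  · exact hyne h'

/-- the matrix `R_dᵀ W_d R_d` is Schur stable: all of its (complex)
eigenvalues have modulus strictly less than `1`. -/
theorem RtWdR_schur_stable
    (N d : ℕ) (hN : 2 ≤ N) (hd : 1 ≤ d)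
    (W : Matrix (Fin N) (Fin N) ℝ)
    (hWnonneg : ∀ i j, 0 ≤ W i j)
    (hWself : ∀ i, 0 < W i i)
    (hWconn : ∀ i j : Fin N, Relation.TransGen (fun a b => 0 < W b a) i j)
    (hWrow : ∀ i, ∑ j, W i j = 1)
    (hWcol : ∀ j, ∑ i, W i j = 1)
    (R : Matrix (Fin N × Fin d) (Fin ((N - 1) * d)) ℝ)
    (hRtR : Rᵀ * R = 1)
    (hRRt : R * Rᵀ = 1 - (N : ℝ)⁻¹ • (onesNd N d * (onesNd N d)ᵀ))
    (hRones : Rᵀ * onesNd N d = 0) :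
    ∀ μ : ℂ, μ ∈ spectrum ℂ ((Rᵀ * kronId W d * R).map (fun a : ℝ => (a : ℂ))) →
      ‖μ‖ < 1 := by
  intro μ hμ
  set f : ℝ →+* ℂ := Complex.ofRealHom with hf
  have hfe : (fun a : ℝ => (a : ℂ)) = ⇑f := rfl
  set Rc := R.map f with hRc
  set Wc := (kronId W d).map f with hWc
  set Oc := (onesNd N d).map f with hOc
  set M := (Rᵀ * kronId W d * R).map (fun a : ℝ => (a : ℂ)) with hM
  -- complex versions of hypotheses
  have h1 : Rcᵀ * Rc = 1 := by
    rw [hRc, ← Matrix.transpose_map, ← Matrix.map_mul, hRtR, Matrix.map_one f f.map_zero f.map_one]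
  have h3 : Rcᵀ * Oc = 0 := by
    rw [hRc, hOc, ← Matrix.transpose_map, ← Matrix.map_mul, hRones, Matrix.map_zero f f.map_zero]
  have h3' : Ocᵀ * Rc = 0 := by
    have := congrArg Matrix.transpose h3
    rwa [Matrix.transpose_mul, Matrix.transpose_transpose, Matrix.transpose_zero] at this
  have mapsmul : ∀ {m' n' : Type} [Fintype m'] [Fintype n']
      (A : Matrix m' n' ℝ), ((N : ℝ)⁻¹ • A).map ⇑f = ((N : ℂ))⁻¹ • (A.map ⇑f) := by
    intro m' n' _ _ A
    ext p q
    simp [Matrix.map_apply, hf]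
  have h4 : Rc * Rcᵀ = 1 - ((N : ℂ))⁻¹ • (Oc * Ocᵀ) := by
    have hmap := congrArg (fun A => A.map ⇑f) hRRt
    rw [Matrix.map_mul, Matrix.map_sub (⇑f) (fun a b => _root_.map_sub f a b),
      Matrix.map_one (⇑f) f.map_zero f.map_one, mapsmul, Matrix.map_mul,
      Matrix.transpose_map, Matrix.transpose_map] at hmap
    exact hmap
  have h2 : Ocᵀ * Wc = Ocᵀ := by
    ext k p
    simp only [hOc, hWc, Matrix.mul_apply, Matrix.transpose_apply, Matrix.map_apply,
      kronId, onesNd, Matrix.of_apply, hf, apply_ite Complex.ofRealHom, _root_.map_one, _root_.map_zero,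
      Complex.ofRealHom_eq_coe]
    rw [Fintype.sum_prod_type]
    simp only [ite_mul, one_mul, zero_mul, mul_ite, mul_zero]
    by_cases hpk : p.2 = k
    · subst hpk
      simp only [Finset.sum_ite_eq', Finset.mem_univ, if_true, if_pos rfl]
      rw [← Complex.ofReal_sum]
      rw [hWcol p.1]
      simp
    · simp only [Finset.sum_ite_eq', Finset.mem_univ, if_true]
      simp [hpk]
  -- M in complex form
  have hMc : M = Rcᵀ * Wc * Rc := by
    rw [hM, hfe, Matrix.map_mul, Matrix.map_mul, Matrix.transpose_map]
  -- key intertwining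
  have hint : Rc * M = Wc * Rc := by
    rw [hMc, ← Matrix.mul_assoc, ← Matrix.mul_assoc, h4]
    rw [Matrix.sub_mul, Matrix.one_mul, Matrix.smul_mul, Matrix.mul_assoc (Oc) (Ocᵀ) Wc, h2]
    rw [Matrix.sub_mul, Matrix.smul_mul, Matrix.mul_assoc, h3', Matrix.mul_zero,
      smul_zero, sub_zero]
  -- extract an eigenvector
  have hunit : ¬ IsUnit (algebraMap ℂ (Matrix (Fin ((N-1)*d)) (Fin ((N-1)*d)) ℂ) μ - M) :=
    spectrum.mem_iff.mp hμ
  have hdet : (algebraMap ℂ (Matrix (Fin ((N-1)*d)) (Fin ((N-1)*d)) ℂ) μ - M).det = 0 := by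
    by_contra h
    exact hunit ((Matrix.isUnit_iff_isUnit_det _).mpr (isUnit_iff_ne_zero.mpr h))
  obtain ⟨v, hv0, hv⟩ := (Matrix.exists_mulVec_eq_zero_iff).mpr hdet
  have hMv : M.mulVec v = μ • v := by
    have hh : (algebraMap ℂ (Matrix (Fin ((N-1)*d)) (Fin ((N-1)*d)) ℂ) μ - M).mulVec v
        = μ • v - M.mulVec v := by
      rw [Matrix.sub_mulVec]
      congr 1
      rw [Algebra.algebraMap_eq_smul_one, Matrix.smul_mulVec, Matrix.one_mulVec]
    rw [hv] at hh
    exact (eq_of_sub_eq_zero hh.symm).symm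
  -- lift to x = Rc v
  set x := Rc.mulVec v with hx
  have hxv : Rcᵀ.mulVec x = v := by
    rw [hx, Matrix.mulVec_mulVec, h1, Matrix.one_mulVec]
  have hxne : x ≠ 0 := by
    intro h
    rw [h, Matrix.mulVec_zero] at hxv
    exact hv0 hxv.symm
  have hWx : Wc.mulVec x = μ • x := by
    rw [hx, Matrix.mulVec_mulVec, ← hint, ← Matrix.mulVec_mulVec, hMv,
      Matrix.mulVec_smul]
  have hOx : Ocᵀ.mulVec x = 0 := by
    rw [hx, Matrix.mulVec_mulVec, h3', Matrix.zero_mulVec]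
  -- choose the slice
  have hne : (Finset.univ : Finset (Fin N × Fin d)).Nonempty :=
    ⟨(⟨0, by omega⟩, ⟨0, by omega⟩), Finset.mem_univ _⟩
  obtain ⟨p0, -, hp0⟩ := Finset.exists_max_image (Finset.univ : Finset (Fin N × Fin d))
    (fun p => ‖x p‖) hne
  set k0 := p0.2 with hk0
  set y : Fin N → ℂ := fun i => x (i, k0) with hy
  have hyne : y ≠ 0 := by
    obtain ⟨q, hq⟩ := Function.ne_iff.mp hxne
    have h1' : 0 < ‖x q‖ := norm_pos_iff.mpr hq
    have h2' : ‖x q‖ ≤ ‖x p0‖ := hp0 q (Finset.mem_univ _)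
    intro h
    have : y p0.1 = 0 := by rw [h]; rfl
    rw [hy] at this
    simp only at this
    rw [show ((p0.1 : Fin N), k0) = p0 from Prod.ext rfl rfl] at this
    rw [this] at h2'
    simp only [norm_zero] at h2'
    linarith
  have heig : ∀ i, ∑ j, (W i j : ℂ) * y j = μ * y i := by
    intro i
    have := congrFun hWx (i, k0)
    simp only [Matrix.mulVec, dotProduct, Pi.smul_apply, smul_eq_mul] at this
    rw [Fintype.sum_prod_type] at this
    simp only [hWc, Matrix.map_apply, kronId, Matrix.of_apply, hf,
      apply_ite Complex.ofRealHom, _root_.map_zero, Complex.ofRealHom_eq_coe,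
      ite_mul, zero_mul] at this
    simp only [Finset.sum_ite_eq, Finset.sum_ite_eq', Finset.mem_univ, if_true] at this
    exact this
  have hsum0 : ∑ i, y i = 0 := by
    have := congrFun hOx k0
    simp only [Matrix.mulVec, dotProduct, Matrix.transpose_apply, hOc,
      Matrix.map_apply, onesNd, Matrix.of_apply, hf, apply_ite Complex.ofRealHom,
      _root_.map_one, _root_.map_zero, Complex.ofRealHom_eq_coe, ite_mul, one_mul,
      zero_mul, Pi.zero_apply] at this
    rw [Fintype.sum_prod_type] at this
    simp only [Finset.sum_ite_eq, Finset.sum_ite_eq', Finset.mem_univ, if_true] at this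
    exact this
  exact stoch_eig hN W hWnonneg hWself hWconn hWrow μ y hyne heig hsum0
end
end

section
/- Fix x ∈ ℝⁿ and consider the dynamics z^{t+1} = W_d zᵗ + (W_d − I_{Nd})φ(x) with initialization satisfying 1_{N,d}ᵀ z⁰ = 0. Then zᵗ converges exponentially to the point z⋆ whose i-th block is z⋆_i = σ(x) − φ_i(x): there exist C > 0 and ρ ∈ (0,1) such that ‖zᵗ − z⋆‖ ≤ C ρᵗ ‖z⁰ − z⋆‖ for all t ≥ 0. -/
open Matrix Finset

noncomputable section

/-- Euclidean norm of a vector indexed by a finite type. -/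
def enorm {ι : Type*} [Fintype ι] (v : ι → ℝ) : ℝ :=
  Real.sqrt (∑ i, v i ^ 2)

section helpers
variable {N : ℕ}

/-- Quantitative ℓ² bound for matrices with nonneg entries and row/column sums ≤ s. -/
lemma sq_sum_mulVec_le (B : Matrix (Fin N) (Fin N) ℝ) (s : ℝ) (hs : 0 ≤ s)
    (hB : ∀ i j, 0 ≤ B i j) (hrow : ∀ i, ∑ j, B i j ≤ s) (hcol : ∀ j, ∑ i, B i j ≤ s)
    (u : Fin N → ℝ) : ∑ i, ((B *ᵥ u) i) ^ 2 ≤ s ^ 2 * ∑ j, (u j) ^ 2 := by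
  have key : ∀ i, ((B *ᵥ u) i) ^ 2 ≤ s * ∑ j, B i j * (u j) ^ 2 := by
    intro i
    have cs := Finset.sum_mul_sq_le_sq_mul_sq Finset.univ
      (fun j => Real.sqrt (B i j)) (fun j => Real.sqrt (B i j) * u j)
    have e1 : ∀ j, Real.sqrt (B i j) * (Real.sqrt (B i j) * u j) = B i j * u j := by
      intro j
      rw [← mul_assoc, Real.mul_self_sqrt (hB i j)]
    have e2 : ∀ j, Real.sqrt (B i j) ^ 2 = B i j := fun j => Real.sq_sqrt (hB i j)
    have e3 : ∀ j, (Real.sqrt (B i j) * u j) ^ 2 = B i j * (u j) ^ 2 := by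
      intro j; rw [mul_pow, e2]
    simp only [e1, e2, e3] at cs
    have hBv : (B *ᵥ u) i = ∑ j, B i j * u j := rfl
    rw [hBv]
    refine le_trans cs ?_
    have h2 : (0:ℝ) ≤ ∑ j, B i j * (u j) ^ 2 :=
      Finset.sum_nonneg fun j _ => mul_nonneg (hB i j) (sq_nonneg _)
    exact mul_le_mul_of_nonneg_right (hrow i) h2
  calc ∑ i, ((B *ᵥ u) i) ^ 2 ≤ ∑ i, s * ∑ j, B i j * (u j) ^ 2 :=
        Finset.sum_le_sum fun i _ => key i
    _ = s * ∑ j, (∑ i, B i j) * (u j) ^ 2 := by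
        rw [← Finset.mul_sum, Finset.sum_comm]
        congr 1; refine Finset.sum_congr rfl fun j _ => ?_
        rw [Finset.sum_mul]
    _ ≤ s * ∑ j, s * (u j) ^ 2 := by
        refine mul_le_mul_of_nonneg_left (Finset.sum_le_sum fun j _ => ?_) hs
        exact mul_le_mul_of_nonneg_right (hcol j) (sq_nonneg _)
    _ = s ^ 2 * ∑ j, (u j) ^ 2 := by rw [← Finset.mul_sum, ← mul_assoc, sq]

lemma pow_nonneg_entries (W : Matrix (Fin N) (Fin N) ℝ) (hW : ∀ i j, 0 ≤ W i j) :
    ∀ t i j, 0 ≤ (W ^ t) i j := by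
  intro t
  induction t with
  | zero => intro i j; simp [Matrix.one_apply]; positivity
  | succ t ih =>
      intro i j
      rw [pow_succ', Matrix.mul_apply]
      exact Finset.sum_nonneg fun k _ => mul_nonneg (hW i k) (ih k j)

lemma pow_row_sum (W : Matrix (Fin N) (Fin N) ℝ) (hW : ∀ i, ∑ j, W i j = 1) :
    ∀ t i, ∑ j, (W ^ t) i j = 1 := by
  intro t
  induction t with
  | zero => intro i; simp [Matrix.one_apply]
  | succ t ih =>
      intro i
      simp only [pow_succ', Matrix.mul_apply]
      rw [Finset.sum_comm]
      calc ∑ k, ∑ j, W i k * (W ^ t) k j = ∑ k, W i k * ∑ j, (W ^ t) k j := by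
            simp [Finset.mul_sum]
        _ = 1 := by simp [ih, hW i]

lemma pow_col_sum (W : Matrix (Fin N) (Fin N) ℝ) (hW : ∀ j, ∑ i, W i j = 1) :
    ∀ t j, ∑ i, (W ^ t) i j = 1 := by
  intro t
  induction t with
  | zero => intro j; simp [Matrix.one_apply]
  | succ t ih =>
      intro j
      simp only [pow_succ, Matrix.mul_apply]
      rw [Finset.sum_comm]
      calc ∑ k, ∑ i, (W ^ t) i k * W k j = ∑ k, (∑ i, (W ^ t) i k) * W k j := by
            simp [Finset.sum_mul]
        _ = 1 := by simp [ih, hW j]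

lemma pow_pos_mono (W : Matrix (Fin N) (Fin N) ℝ) (hW : ∀ i j, 0 ≤ W i j)
    (hself : ∀ i, 0 < W i i) {i j : Fin N} {a b : ℕ} (hab : a ≤ b)
    (h : 0 < (W ^ a) i j) : 0 < (W ^ b) i j := by
  induction b, hab using Nat.le_induction with
  | base => exact h
  | succ b hb ih =>
      rw [pow_succ', Matrix.mul_apply]
      refine Finset.sum_pos'
        (fun k _ => mul_nonneg (hW i k) (pow_nonneg_entries W hW b k j))
        ⟨i, Finset.mem_univ i, mul_pos (hself i) ih⟩

lemma exists_pos_pow (W : Matrix (Fin N) (Fin N) ℝ) (hW : ∀ i j, 0 ≤ W i j)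
    (hconn : ∀ i j : Fin N, Relation.TransGen (fun a b => 0 < W b a) i j)
    (i j : Fin N) : ∃ t, 0 < (W ^ t) j i := by
  have h := hconn i j
  induction h with
  | single hb => exact ⟨1, by simpa [pow_one] using hb⟩
  | @tail b c h1 hbc ih =>
      obtain ⟨t, ht⟩ := ih
      refine ⟨t + 1, ?_⟩
      rw [pow_succ', Matrix.mul_apply]
      exact Finset.sum_pos'
        (fun k _ => mul_nonneg (hW c k) (pow_nonneg_entries W hW t k i))
        ⟨b, Finset.mem_univ b, mul_pos hbc ht⟩

lemma exists_uniform_pos (W : Matrix (Fin N) (Fin N) ℝ) (hW : ∀ i j, 0 ≤ W i j)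
    (hself : ∀ i, 0 < W i i)
    (hconn : ∀ i j : Fin N, Relation.TransGen (fun a b => 0 < W b a) i j) :
    ∃ m, 1 ≤ m ∧ ∀ i j, 0 < (W ^ m) i j := by
  choose t ht using fun p : Fin N × Fin N => exists_pos_pow W hW hconn p.2 p.1
  refine ⟨Finset.univ.sup t + 1, Nat.le_add_left 1 _, fun i j => ?_⟩
  exact pow_pos_mono W hW hself
    (le_trans (Finset.le_sup (Finset.mem_univ (i, j))) (Nat.le_succ _)) (ht (i, j))

lemma kron_mulVec {N d : ℕ} (W : Matrix (Fin N) (Fin N) ℝ) (v : Fin N × Fin d → ℝ)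
    (i : Fin N) (k : Fin d) :
    (kronId W d *ᵥ v) (i, k) = ∑ j, W i j * v (j, k) := by
  simp only [Matrix.mulVec, dotProduct, kronId, Matrix.of_apply]
  rw [Fintype.sum_prod_type]
  refine Finset.sum_congr rfl fun j _ => ?_
  simp [Finset.sum_ite_eq]

end helpers

/-- for fixed `x`, the dynamics `z^{t+1} = W_d zᵗ + (W_d − I)φ(x)` initialized
with `1_{N,d}ᵀ z⁰ = 0` converges exponentially to the point whose `i`-th block is
`σ(x) − φ_i(x_i)`. -/
theorem fast_dynamics_exponential_convergence
    (N d : ℕ) (hN : 1 ≤ N)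
    (n : Fin N → ℕ)
    (W : Matrix (Fin N) (Fin N) ℝ)
    (hWnonneg : ∀ i j, 0 ≤ W i j)
    (hWself : ∀ i, 0 < W i i)
    (hWconn : ∀ i j : Fin N, Relation.TransGen (fun a b => 0 < W b a) i j)
    (hWrow : ∀ i, ∑ j, W i j = 1)
    (hWcol : ∀ j, ∑ i, W i j = 1)
    (phi : ∀ i : Fin N, (Fin (n i) → ℝ) → (Fin d → ℝ))
    (x : ∀ i : Fin N, Fin (n i) → ℝ)
    (phiv : Fin N × Fin d → ℝ)
    (hphiv : ∀ p, phiv p = phi p.1 (x p.1) p.2)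
    (sigma : Fin d → ℝ)
    (hsigma : ∀ k, sigma k = (N : ℝ)⁻¹ * ∑ i, phi i (x i) k)
    (zstar : Fin N × Fin d → ℝ)
    (hzstar : ∀ p, zstar p = sigma p.2 - phi p.1 (x p.1) p.2)
    (z : ℕ → Fin N × Fin d → ℝ)
    (hz0 : ∀ k : Fin d, ∑ i, z 0 (i, k) = 0)
    (hz : ∀ t, z (t + 1) = (kronId W d) *ᵥ (z t) + (kronId W d - 1) *ᵥ phiv) :
    ∃ C : ℝ, 0 < C ∧ ∃ ρ : ℝ, 0 < ρ ∧ ρ < 1 ∧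
      ∀ t : ℕ, _root_.enorm (z t - zstar) ≤ C * ρ ^ t * _root_.enorm (z 0 - zstar) := by
  
  have hNR : (0:ℝ) < (N:ℝ) := by exact_mod_cast hN
  -- error recurrence, slice-wise
  have hrec : ∀ t (i : Fin N) (k : Fin d),
      z (t+1) (i,k) - zstar (i,k) = ∑ j, W i j * (z t (j,k) - zstar (j,k)) := by
    intro t i k
    have h1 : z (t+1) (i,k)
        = (∑ j, W i j * z t (j,k)) + ((∑ j, W i j * phiv (j,k)) - phiv (i,k)) := by
      rw [hz t]
      have : ((kronId W d - 1) *ᵥ phiv) (i,k)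
          = (∑ j, W i j * phiv (j,k)) - phiv (i,k) := by
        rw [Matrix.sub_mulVec, Pi.sub_apply, kron_mulVec, Matrix.one_mulVec]
      rw [Pi.add_apply, kron_mulVec, this]
    have h2 : ∀ j : Fin N, zstar (j,k) = sigma k - phiv (j,k) := by
      intro j; rw [hzstar, hphiv]
    have h3 : ∑ j, W i j * sigma k = sigma k := by
      rw [← Finset.sum_mul, hWrow, one_mul]
    rw [h1]
    simp only [h2, mul_sub, Finset.sum_sub_distrib, h3]
    ring
  -- initial slices
  set u0 : Fin d → Fin N → ℝ := fun k i => z 0 (i,k) - zstar (i,k) with hu0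
  -- solution formula
  have hsol : ∀ (k : Fin d) (t : ℕ) (i : Fin N),
      z t (i,k) - zstar (i,k) = ((W ^ t) *ᵥ u0 k) i := by
    intro k t
    induction t with
    | zero => intro i; simp [hu0, Matrix.one_mulVec]
    | succ t ih =>
        intro i
        rw [hrec t i k]
        have : ∑ j, W i j * (z t (j,k) - zstar (j,k))
            = (W *ᵥ ((W ^ t) *ᵥ u0 k)) i := by
          refine Finset.sum_congr rfl fun j _ => ?_
          rw [ih j]
        rw [this, Matrix.mulVec_mulVec, ← pow_succ']
  -- zero sum initially
  have hzs0 : ∀ k, ∑ i, u0 k i = 0 := by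
    intro k
    have hsum : ∑ i, zstar (i,k) = 0 := by
      have : ∀ i : Fin N, zstar (i,k) = sigma k - phi i (x i) k := fun i => hzstar (i,k)
      simp only [this, Finset.sum_sub_distrib, Finset.sum_const, Finset.card_univ,
        Fintype.card_fin, nsmul_eq_mul, hsigma]
      field_simp
      ring
    simp only [hu0, Finset.sum_sub_distrib, hz0 k, hsum, sub_zero]
  -- zero sum propagates
  have hzs : ∀ k t, ∑ i, ((W ^ t) *ᵥ u0 k) i = 0 := by
    intro k t
    have : ∑ i, ((W ^ t) *ᵥ u0 k) i = ∑ j, (∑ i, (W ^ t) i j) * u0 k j := by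
      simp only [Matrix.mulVec, dotProduct]
      rw [Finset.sum_comm]
      exact Finset.sum_congr rfl fun j _ => by rw [Finset.sum_mul]
    rw [this]
    simp [pow_col_sum W hWcol t, hzs0 k]
  -- contraction setup
  obtain ⟨m, hm1, hmpos⟩ := exists_uniform_pos W hWnonneg hWself hWconn
  haveI : Nonempty (Fin N) := ⟨⟨0, hN⟩⟩
  set A := W ^ m with hA
  set ε := Finset.univ.inf' Finset.univ_nonempty (fun p : Fin N × Fin N => A p.1 p.2) with hε
  have hεpos : 0 < ε := by
    rw [hε, Finset.lt_inf'_iff]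
    exact fun p _ => hmpos p.1 p.2
  have hεle : ∀ i j, ε ≤ A i j := fun i j => Finset.inf'_le _ (Finset.mem_univ (i,j))
  have hNε : (N:ℝ) * ε ≤ 1 := by
    have h1 : ∑ j, A ⟨0, hN⟩ j = 1 := pow_row_sum W hWrow m _
    have h2 : (N:ℝ) * ε = ∑ _j : Fin N, ε := by
      simp [Finset.sum_const, mul_comm]
    rw [h2, ← h1]
    exact Finset.sum_le_sum fun j _ => hεle _ j
  set ρ0 : ℝ := 1 - (N:ℝ) * ε with hρ0
  have hρ0nonneg : 0 ≤ ρ0 := by simp [hρ0, hNε]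
  have hρ0lt : ρ0 < 1 := by
    have : 0 < (N:ℝ) * ε := mul_pos hNR hεpos
    simp only [hρ0]; linarith
  -- key contraction
  have key : ∀ u : Fin N → ℝ, ∑ i, u i = 0 →
      ∑ i, ((A *ᵥ u) i) ^ 2 ≤ ρ0 ^ 2 * ∑ j, (u j) ^ 2 := by
    intro u hu
    set B : Matrix (Fin N) (Fin N) ℝ := Matrix.of fun i j => A i j - ε with hB
    have hAB : A *ᵥ u = B *ᵥ u := by
      funext i
      simp only [Matrix.mulVec, dotProduct, hB, Matrix.of_apply, sub_mul]
      rw [Finset.sum_sub_distrib, ← Finset.mul_sum, hu, mul_zero, sub_zero]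
    rw [hAB]
    refine sq_sum_mulVec_le B ρ0 hρ0nonneg (fun i j => by
        simpa [hB] using hεle i j) (fun i => ?_) (fun j => ?_) u
    · have : ∑ j, (A i j - ε) = 1 - (N:ℝ) * ε := by
        rw [Finset.sum_sub_distrib, pow_row_sum W hWrow m i]
        simp [Finset.sum_const, mul_comm]
      simp only [hB, Matrix.of_apply]
      rw [this]
    · have : ∑ i, (A i j - ε) = 1 - (N:ℝ) * ε := by
        rw [Finset.sum_sub_distrib, pow_col_sum W hWcol m j]
        simp [Finset.sum_const, mul_comm]
      simp only [hB, Matrix.of_apply]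
      rw [this]
  -- nonexpansiveness of a single W step
  have nonexp : ∀ u : Fin N → ℝ, ∑ i, ((W *ᵥ u) i) ^ 2 ≤ ∑ j, (u j) ^ 2 := by
    intro u
    have := sq_sum_mulVec_le W 1 zero_le_one hWnonneg
      (fun i => le_of_eq (hWrow i)) (fun j => le_of_eq (hWcol j)) u
    simpa using this
  -- total squared error
  set Q : ℕ → ℝ := fun t => ∑ k : Fin d, ∑ i, (((W ^ t) *ᵥ u0 k) i) ^ 2 with hQ
  have hQnonneg : ∀ t, 0 ≤ Q t :=
    fun t => Finset.sum_nonneg fun k _ => Finset.sum_nonneg fun i _ => sq_nonneg _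
  have hQstep : ∀ t, Q (t+1) ≤ Q t := by
    intro t
    refine Finset.sum_le_sum fun k _ => ?_
    have : (W ^ (t+1)) *ᵥ u0 k = W *ᵥ ((W ^ t) *ᵥ u0 k) := by
      rw [Matrix.mulVec_mulVec, ← pow_succ']
    rw [this]
    exact nonexp _
  have hQm : ∀ t, Q (t + m) ≤ ρ0 ^ 2 * Q t := by
    intro t
    have : ∀ k : Fin d, ∑ i, (((W ^ (t+m)) *ᵥ u0 k) i) ^ 2
        ≤ ρ0 ^ 2 * ∑ i, (((W ^ t) *ᵥ u0 k) i) ^ 2 := by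
      intro k
      have hpow : (W ^ (t+m)) *ᵥ u0 k = A *ᵥ ((W ^ t) *ᵥ u0 k) := by
        rw [Matrix.mulVec_mulVec, hA, ← pow_add, add_comm]
      rw [hpow]
      exact key _ (hzs k t)
    calc Q (t + m) ≤ ∑ k : Fin d, ρ0 ^ 2 * ∑ i, (((W ^ t) *ᵥ u0 k) i) ^ 2 :=
          Finset.sum_le_sum fun k _ => this k
      _ = ρ0 ^ 2 * Q t := by rw [← Finset.mul_sum]
  have hQmono : ∀ a b : ℕ, a ≤ b → Q b ≤ Q a := by
    intro a b hab
    induction b, hab using Nat.le_induction with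
    | base => exact le_refl _
    | succ b hb ih => exact le_trans (hQstep b) ih
  have hQq : ∀ q : ℕ, Q (m * q) ≤ (ρ0 ^ 2) ^ q * Q 0 := by
    intro q
    induction q with
    | zero => simp
    | succ q ih =>
        have h1 : m * (q + 1) = m * q + m := by ring
        calc Q (m * (q+1)) = Q (m * q + m) := by rw [h1]
          _ ≤ ρ0 ^ 2 * Q (m * q) := hQm _
          _ ≤ ρ0 ^ 2 * ((ρ0 ^ 2) ^ q * Q 0) :=
              mul_le_mul_of_nonneg_left ih (sq_nonneg _)
          _ = (ρ0 ^ 2) ^ (q+1) * Q 0 := by ring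
  -- intermediate rate
  set ρ1 : ℝ := max ρ0 (1/2) with hρ1
  have hρ1pos : 0 < ρ1 := lt_of_lt_of_le (by norm_num) (le_max_right _ _)
  have hρ1lt : ρ1 < 1 := max_lt hρ0lt (by norm_num)
  have hρ0ρ1 : ρ0 ≤ ρ1 := le_max_left _ _
  have hQboundq : ∀ q : ℕ, Q (m * q) ≤ (ρ1 ^ q) ^ 2 * Q 0 := by
    intro q
    refine le_trans (hQq q) (mul_le_mul_of_nonneg_right ?_ (hQnonneg 0))
    have : (ρ0 ^ 2) ^ q ≤ (ρ1 ^ 2) ^ q :=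
      pow_le_pow_left₀ (sq_nonneg _) (by
        exact pow_le_pow_left₀ hρ0nonneg hρ0ρ1 2) q
    calc (ρ0 ^ 2) ^ q ≤ (ρ1 ^ 2) ^ q := this
      _ = (ρ1 ^ q) ^ 2 := by rw [← pow_mul, ← pow_mul, mul_comm]
  -- enorm in terms of Q
  have hen : ∀ t, _root_.enorm (z t - zstar) = Real.sqrt (Q t) := by
    intro t
    unfold _root_.enorm
    congr 1
    show ∑ p : Fin N × Fin d, (z t - zstar) p ^ 2
        = ∑ k : Fin d, ∑ i, ((W ^ t) *ᵥ u0 k) i ^ 2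
    rw [Fintype.sum_prod_type, Finset.sum_comm]
    refine Finset.sum_congr rfl fun k _ => Finset.sum_congr rfl fun i _ => ?_
    rw [Pi.sub_apply, hsol k t i]
  -- final rate
  set ρ : ℝ := ρ1 ^ ((m:ℝ)⁻¹) with hρdef
  have hmR : (0:ℝ) < (m:ℝ) := by exact_mod_cast hm1
  have hρpos : 0 < ρ := Real.rpow_pos_of_pos hρ1pos _
  have hρlt : ρ < 1 := Real.rpow_lt_one (le_of_lt hρ1pos) hρ1lt (by positivity)
  have hρm : ρ ^ m = ρ1 := by
    rw [hρdef, ← Real.rpow_natCast (ρ1 ^ ((m:ℝ)⁻¹)) m, ← Real.rpow_mul (le_of_lt hρ1pos),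
      inv_mul_cancel₀ (ne_of_gt hmR), Real.rpow_one]
  refine ⟨1 / ρ1, by positivity, ρ, hρpos, hρlt, fun t => ?_⟩
  -- bound
  have hmpos' : 0 < m := hm1
  have hdiv := Nat.div_add_mod t m
  set q := t / m with hq
  have hle1 : m * q ≤ t := Nat.mul_div_le t m
  have hmod : t % m < m := Nat.mod_lt t hmpos'
  have hle2 : t ≤ m * (q + 1) := by
    calc t = m * q + t % m := hdiv.symm
      _ ≤ m * q + m := Nat.add_le_add_left (le_of_lt hmod) _
      _ = m * (q + 1) := by ring
  have step1 : _root_.enorm (z t - zstar) ≤ ρ1 ^ q * _root_.enorm (z 0 - zstar) := by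
    rw [hen t, hen 0]
    have h1 : Q t ≤ (ρ1 ^ q) ^ 2 * Q 0 := le_trans (hQmono _ _ hle1) (hQboundq q)
    calc Real.sqrt (Q t) ≤ Real.sqrt ((ρ1 ^ q) ^ 2 * Q 0) := Real.sqrt_le_sqrt h1
      _ = ρ1 ^ q * Real.sqrt (Q 0) := by
          rw [Real.sqrt_mul (sq_nonneg _), Real.sqrt_sq (by positivity)]
  have step2 : ρ1 ^ q ≤ (1 / ρ1) * ρ ^ t := by
    have h1 : ρ ^ (m * (q+1)) ≤ ρ ^ t :=
      pow_le_pow_of_le_one (le_of_lt hρpos) (le_of_lt hρlt) hle2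
    have h2 : ρ ^ (m * (q+1)) = ρ1 ^ (q+1) := by
      rw [pow_mul, hρm]
    have h4 : ρ1 ^ (q+1) ≤ ρ ^ t := h2 ▸ h1
    have h5 : ρ1 ^ q = (1 / ρ1) * ρ1 ^ (q+1) := by
      rw [pow_succ]
      field_simp
    rw [h5]
    exact mul_le_mul_of_nonneg_left h4 (by positivity)
  calc _root_.enorm (z t - zstar) ≤ ρ1 ^ q * _root_.enorm (z 0 - zstar) := step1
    _ ≤ ((1 / ρ1) * ρ ^ t) * _root_.enorm (z 0 - zstar) := by
        refine mul_le_mul_of_nonneg_right step2 ?_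
        unfold _root_.enorm; positivity
    _ = 1 / ρ1 * ρ ^ t * _root_.enorm (z 0 - zstar) := by ring
end
end

section
/- Let x⋆ be the unique Nash equilibrium of the game. Then for any γ > 0 and δ > 0, the pair (x⋆, h(x⋆)) with h(x⋆) = −R_dᵀφ(x⋆) is an equilibrium of the transformed TRADES dynamics: x⋆ = x⋆ + δ(P_X[x⋆ − γ F̃(x⋆, φ(x⋆) + R_d h(x⋆))] − x⋆) and h(x⋆) = R_dᵀ W_d R_d h(x⋆) + R_dᵀ(W_d − I_{Nd})φ(x⋆). -/
open Matrix Finset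

noncomputable section

/-- the pair `(x⋆, h(x⋆))`, with `x⋆` the (unique) Nash equilibrium and
`h(x⋆) = −R_dᵀ φ(x⋆)`, is an equilibrium of the transformed TRADES dynamics, for any
`γ > 0` and `δ > 0`. -/
theorem NE_is_equilibrium_of_trades
    (N d : ℕ) (hN : 1 ≤ N)
    (n : Fin N → ℕ)
    -- local feasible sets: nonempty, closed, convex
    (X : ∀ i : Fin N, Set (Fin (n i) → ℝ))
    (hXne : ∀ i, (X i).Nonempty) (hXcl : ∀ i, IsClosed (X i)) (hXcv : ∀ i, Convex ℝ (X i))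
    -- Euclidean projections onto the sets `X i`
    (proj : ∀ i : Fin N, (Fin (n i) → ℝ) → (Fin (n i) → ℝ))
    (hproj : ∀ i v, proj i v ∈ X i ∧ ∀ y ∈ X i, _root_.enorm (v - proj i v) ≤ _root_.enorm (v - y))
    -- aggregation rules and aggregate
    (phi : ∀ i : Fin N, (Fin (n i) → ℝ) → (Fin d → ℝ))
    -- local operators `F̃_i`
    (Ftil : ∀ i : Fin N, (Fin (n i) → ℝ) → (Fin d → ℝ) → (Fin (n i) → ℝ))
    -- network
    (W : Matrix (Fin N) (Fin N) ℝ)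
    (hWrow : ∀ i, ∑ j, W i j = 1)
    (hWcol : ∀ j, ∑ i, W i j = 1)
    (R : Matrix (Fin N × Fin d) (Fin ((N - 1) * d)) ℝ)
    (hRtR : Rᵀ * R = 1)
    (hRRt : R * Rᵀ = 1 - (N : ℝ)⁻¹ • (onesNd N d * (onesNd N d)ᵀ))
    (hRones : Rᵀ * onesNd N d = 0)
    -- the Nash equilibrium `x⋆` with its fixed-point characterization
    -- `x⋆ = P_X[x⋆ − γ F(x⋆)]` (for every `γ > 0`), where by the chain rule the `i`-th
    -- block of `F(x⋆)` is `F̃_i(x⋆_i, σ(x⋆))`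
    (xstar : ∀ i : Fin N, Fin (n i) → ℝ)
    (sigma : Fin d → ℝ)
    (hsigma : ∀ k, sigma k = (N : ℝ)⁻¹ * ∑ i, phi i (xstar i) k)
    (hxstarX : ∀ i, xstar i ∈ X i)
    (hfix : ∀ γ : ℝ, 0 < γ → ∀ i,
      proj i (xstar i - γ • Ftil i (xstar i) sigma) = xstar i)
    -- the stacked vector `φ(x⋆)` and `h(x⋆) = −R_dᵀ φ(x⋆)`
    (phiv : Fin N × Fin d → ℝ)
    (hphiv : ∀ p, phiv p = phi p.1 (xstar p.1) p.2)
    (h : Fin ((N - 1) * d) → ℝ)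
    (hh : h = -(Rᵀ *ᵥ phiv)) :
    ∀ γ δ : ℝ, 0 < γ → 0 < δ →
      (∀ i, xstar i = xstar i + δ •
        (proj i (xstar i - γ •
          Ftil i (xstar i) (fun k => phiv (i, k) + (R *ᵥ h) (i, k))) - xstar i)) ∧
      (Rᵀ * kronId W d * R) *ᵥ h + (Rᵀ * (kronId W d - 1)) *ᵥ phiv = h := by
  intro γ δ hγ hδ
  have hKO : kronId W d * onesNd N d = onesNd N d := by
    ext p j
    rw [Matrix.mul_apply, Fintype.sum_prod_type]
    simp only [kronId, onesNd, Matrix.of_apply, mul_ite, mul_one, mul_zero]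
    by_cases hpj : p.2 = j
    · simp [hpj, Finset.sum_ite_eq', hWrow]
    · simp only [Finset.sum_ite_eq', Finset.mem_univ, if_true]
      simp [hpj, fun q2 => (show ¬(p.2 = q2 ∧ q2 = j) from fun ⟨a, b⟩ => hpj (a.trans b))]
  have hM : ∀ p, ((onesNd N d * (onesNd N d)ᵀ) *ᵥ phiv) p = ∑ j, phiv (j, p.2) := by
    intro p
    rw [Matrix.mulVec, dotProduct, Fintype.sum_prod_type]
    simp only [Matrix.mul_apply, onesNd, Matrix.of_apply, Matrix.transpose_apply,
      ite_mul, one_mul, zero_mul]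
    simp [Finset.sum_ite_eq, eq_comm]
  have hRh : ∀ p, phiv p + (R *ᵥ h) p = sigma p.2 := by
    intro p
    have h1 : R *ᵥ h = -((R * Rᵀ) *ᵥ phiv) := by
      rw [hh, Matrix.mulVec_neg, Matrix.mulVec_mulVec]
    rw [h1, hRRt, Matrix.sub_mulVec, Matrix.one_mulVec, Matrix.smul_mulVec]
    have h2 := hM p
    simp only [Pi.neg_apply, Pi.sub_apply, Pi.smul_apply, smul_eq_mul, h2]
    rw [hsigma p.2]
    have h3 : ∀ j, phiv (j, p.2) = phi j (xstar j) p.2 := fun j => hphiv (j, p.2)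
    simp [h3]
  constructor
  · intro i
    have harg : (fun k => phiv (i, k) + (R *ᵥ h) (i, k)) = sigma :=
      funext fun k => hRh (i, k)
    rw [harg, hfix γ hγ i]
    simp
  · have hm : Rᵀ * kronId W d * R * Rᵀ = Rᵀ * kronId W d := by
      rw [Matrix.mul_assoc (Rᵀ * kronId W d), hRRt, Matrix.mul_sub, Matrix.mul_one,
        Matrix.mul_smul]
      have : Rᵀ * kronId W d * (onesNd N d * (onesNd N d)ᵀ) = 0 := by
        rw [← Matrix.mul_assoc, Matrix.mul_assoc Rᵀ, hKO, hRones, Matrix.zero_mul]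
      rw [this]
      simp
    rw [hh, Matrix.mulVec_neg, Matrix.mulVec_mulVec, hm,
      Matrix.mul_sub, Matrix.mul_one, Matrix.sub_mulVec]
    abel
end
end

section
/- Consider the singularly perturbed interconnection χ^{t+1} = χᵗ + δ f(χᵗ, wᵗ), w^{t+1} = g(wᵗ, χᵗ), with χᵗ ∈ D ⊆ ℝⁿ (D closed and forward invariant for the χ-update), wᵗ ∈ ℝᵐ. Assume: (i) f and g are Lipschitz continuous in both arguments; (ii) there is a Lipschitz map h : D → ℝᵐ with h(χ) = g(h(χ), χ) for all χ ∈ D; (iii) there exist a continuous U : ℝᵐ → ℝ and b₁,…,b₄ > 0 such that for all χ ∈ D and ψ, ψ₁, ψ₂ ∈ ℝᵐ: b₁‖ψ‖² ≤ U(ψ) ≤ b₂‖ψ‖², U(g(ψ + h(χ), χ) − h(χ)) − U(ψ) ≤ −b₃‖ψ‖², and |U(ψ₁) − U(ψ₂)| ≤ b₄‖ψ₁ − ψ₂‖(‖ψ₁‖ + ‖ψ₂‖); (iv) there exist χ⋆ ∈ D with f(χ⋆, h(χ⋆)) = 0, a continuous V : ℝⁿ → ℝ, δ̄₂ > 0 and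 c₁,…,c₄ > 0 such that for all δ ∈ (0, δ̄₂) and χ, χ₁, χ₂ ∈ D: c₁‖χ − χ⋆‖² ≤ V(χ) ≤ c₂‖χ − χ⋆‖², V(χ + δ f(χ, h(χ))) − V(χ) ≤ −δ c₃‖χ − χ⋆‖², and |V(χ₁) − V(χ₂)| ≤ c₄‖χ₁ − χ₂‖(‖χ₁ − χ⋆‖ + ‖χ₂ − χ⋆‖). Then there exist δ̄ ∈ (0, δ̄₂) and, for each δ ∈ (0, δ̄), constants a > 0 and λ > 0 such that for all initial conditions χ⁰ ∈ D, w⁰ ∈ ℝᵐ: ‖χᵗ − χ⋆‖² + ‖wᵗ − h(χᵗ)‖² ≤ a e^{−λ t}(‖χ⁰ − χ⋆‖² + ‖w⁰ − h(χ⁰)‖²) for all t ≥ 0; in particular (χ⋆, h(χ⋆)) is a globally exponentially stable equilibrium of the interconnection. -/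
open Finset

noncomputable section

lemma aux_sqrt_le {x y : ℝ} (hx : 0 ≤ x) (hy : 0 ≤ y) :
    Real.sqrt (x ^ 2 + y ^ 2) ≤ x + y := by
  have h1 : Real.sqrt (x ^ 2 + y ^ 2) ≤ Real.sqrt ((x + y) ^ 2) :=
    Real.sqrt_le_sqrt (by nlinarith only [hx, hy, mul_nonneg hx hy])
  simpa [Real.sqrt_sq (by positivity : (0:ℝ) ≤ x + y)] using h1

set_option maxHeartbeats 2000000 in
/-- discrete-time singular perturbation result. Under Lipschitz continuity
of the maps, existence of a Lipschitz equilibrium map `h` for the fast dynamics, a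
Lyapunov function `U` for the boundary layer system and a Lyapunov function `V` for the
reduced system, there exists `δ̄ ∈ (0, δ̄₂)` such that for each `δ ∈ (0, δ̄)` the
interconnection converges exponentially: `(χ⋆, h(χ⋆))` is globally exponentially stable. -/
theorem singular_perturbation_exponential_stability
    (nn mm : ℕ)
    (D : Set (EuclideanSpace ℝ (Fin nn)))
    (hDcl : IsClosed D)
    (f : EuclideanSpace ℝ (Fin nn) → EuclideanSpace ℝ (Fin mm) → EuclideanSpace ℝ (Fin nn))
    (g : EuclideanSpace ℝ (Fin mm) → EuclideanSpace ℝ (Fin nn) → EuclideanSpace ℝ (Fin mm))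
    (h : EuclideanSpace ℝ (Fin nn) → EuclideanSpace ℝ (Fin mm))
    (δbar2 : ℝ) (hδbar2 : 0 < δbar2)
    -- `D` is forward invariant for the `χ`-update
    (hinv : ∀ δ : ℝ, 0 < δ → δ < δbar2 → ∀ χ ∈ D, ∀ w, χ + δ • f χ w ∈ D)
    -- (i) `f` and `g` are Lipschitz continuous in both arguments
    (Lf : ℝ) (hLf : 0 < Lf)
    (hfLip : ∀ χ ∈ D, ∀ χ' ∈ D, ∀ w w',
      ‖f χ w - f χ' w'‖ ≤ Lf * Real.sqrt (‖χ - χ'‖ ^ 2 + ‖w - w'‖ ^ 2))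
    (Lg : ℝ) (hLg : 0 < Lg)
    (hgLip : ∀ χ ∈ D, ∀ χ' ∈ D, ∀ w w',
      ‖g w χ - g w' χ'‖ ≤ Lg * Real.sqrt (‖χ - χ'‖ ^ 2 + ‖w - w'‖ ^ 2))
    -- (ii) `h` is a Lipschitz equilibrium map of the fast dynamics
    (Lh : ℝ) (hLh : 0 < Lh)
    (hhLip : ∀ χ ∈ D, ∀ χ' ∈ D, ‖h χ - h χ'‖ ≤ Lh * ‖χ - χ'‖)
    (heq : ∀ χ ∈ D, h χ = g (h χ) χ)
    -- (iii) Lyapunov function for the boundary layer system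
    (U : EuclideanSpace ℝ (Fin mm) → ℝ) (hUcont : Continuous U)
    (b1 b2 b3 b4 : ℝ) (hb1 : 0 < b1) (hb2 : 0 < b2) (hb3 : 0 < b3) (hb4 : 0 < b4)
    (hU1 : ∀ ψ, b1 * ‖ψ‖ ^ 2 ≤ U ψ ∧ U ψ ≤ b2 * ‖ψ‖ ^ 2)
    (hU2 : ∀ χ ∈ D, ∀ ψ, U (g (ψ + h χ) χ - h χ) - U ψ ≤ -b3 * ‖ψ‖ ^ 2)
    (hU3 : ∀ ψ1 ψ2, |U ψ1 - U ψ2| ≤ b4 * ‖ψ1 - ψ2‖ * (‖ψ1‖ + ‖ψ2‖))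
    -- (iv) Lyapunov function for the reduced system
    (χstar : EuclideanSpace ℝ (Fin nn)) (hχstar : χstar ∈ D)
    (hfeq : f χstar (h χstar) = 0)
    (V : EuclideanSpace ℝ (Fin nn) → ℝ) (hVcont : Continuous V)
    (c1 c2 c3 c4 : ℝ) (hc1 : 0 < c1) (hc2 : 0 < c2) (hc3 : 0 < c3) (hc4 : 0 < c4)
    (hV1 : ∀ χ ∈ D, c1 * ‖χ - χstar‖ ^ 2 ≤ V χ ∧ V χ ≤ c2 * ‖χ - χstar‖ ^ 2)
    (hV2 : ∀ δ : ℝ, 0 < δ → δ < δbar2 → ∀ χ ∈ D,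
      V (χ + δ • f χ (h χ)) - V χ ≤ -(δ * c3) * ‖χ - χstar‖ ^ 2)
    (hV3 : ∀ χ1 ∈ D, ∀ χ2 ∈ D,
      |V χ1 - V χ2| ≤ c4 * ‖χ1 - χ2‖ * (‖χ1 - χstar‖ + ‖χ2 - χstar‖)) :
    ∃ δbar : ℝ, 0 < δbar ∧ δbar < δbar2 ∧
      ∀ δ : ℝ, 0 < δ → δ < δbar →
        ∃ a lam : ℝ, 0 < a ∧ 0 < lam ∧
          ∀ (χ : ℕ → EuclideanSpace ℝ (Fin nn)) (w : ℕ → EuclideanSpace ℝ (Fin mm)),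
            χ 0 ∈ D →
            (∀ t, χ (t + 1) = χ t + δ • f (χ t) (w t)) →
            (∀ t, w (t + 1) = g (w t) (χ t)) →
            ∀ t : ℕ,
              ‖χ t - χstar‖ ^ 2 + ‖w t - h (χ t)‖ ^ 2 ≤
                a * Real.exp (-lam * t) *
                  (‖χ 0 - χstar‖ ^ 2 + ‖w 0 - h (χ 0)‖ ^ 2) := by
  -- constants
  set F : ℝ := Lf * (1 + Lh) with hFdef
  have hFpos : 0 < F := mul_pos hLf (by linarith only [hLh])
  set E : ℝ := Lh * F with hEdef
  have hEpos : 0 < E := mul_pos hLh hFpos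
  set κ : ℝ := Real.sqrt (b2 / b1) with hκdef
  have hκpos : 0 < κ := Real.sqrt_pos.mpr (div_pos hb2 hb1)
  set A : ℝ := 2 * b4 * E * (2 * κ + E) with hAdef
  have hApos : 0 < A := mul_pos (mul_pos (by linarith only [hb4]) hEpos)
    (by linarith only [hκpos, hEpos])
  set Bc : ℝ := c4 * Lf * (2 + 2 * F) with hBcdef
  have hBcpos : 0 < Bc := mul_pos (mul_pos hc4 hLf) (by linarith only [hFpos])
  set B2 : ℝ := Bc ^ 2 / (2 * c3) + Bc with hB2def
  have hB2pos : 0 < B2 := by positivity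
  set d : ℝ := min 1 (c3 / (4 * A)) with hddef
  have hdpos : 0 < d := lt_min one_pos (div_pos hc3 (by linarith only [hApos]))
  have hd1 : d ≤ 1 := min_le_left _ _
  have hdA : d * A ≤ c3 / 4 := by
    have h1 : d ≤ c3 / (4 * A) := min_le_right _ _
    have h2 : d * A ≤ (c3 / (4 * A)) * A := mul_le_mul_of_nonneg_right h1 hApos.le
    have h3 : (c3 / (4 * A)) * A = c3 / 4 := by
      field_simp
    linarith only [h2, h3]
  set M : ℝ := max c2 b2 with hMdef
  have hMpos : 0 < M := lt_of_lt_of_le hc2 (le_max_left _ _)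
  set m : ℝ := min c1 (d * b1) with hmdef
  have hmpos : 0 < m := lt_min hc1 (mul_pos hdpos hb1)
  set μ : ℝ := min (c3 / 4) (d * b3 / 2) with hμdef
  have hμpos : 0 < μ := lt_min (by linarith only [hc3]) (by positivity)
  have hμ1 : μ ≤ c3 / 4 := min_le_left _ _
  have hμ2 : μ ≤ d * b3 / 2 := min_le_right _ _
  have hBA : (0:ℝ) < B2 + A := by linarith only [hB2pos, hApos]
  set S : ℝ := min δbar2 (min 1 (min ((d * b3 / 2) / (B2 + A)) ((M / 2) / μ))) with hSdef
  have hS1 : S ≤ δbar2 := min_le_left _ _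
  have hS2 : S ≤ 1 := le_trans (min_le_right _ _) (min_le_left _ _)
  have hS3 : S ≤ (d * b3 / 2) / (B2 + A) :=
    le_trans (min_le_right _ _) (le_trans (min_le_right _ _) (min_le_left _ _))
  have hS4 : S ≤ (M / 2) / μ :=
    le_trans (min_le_right _ _) (le_trans (min_le_right _ _) (min_le_right _ _))
  have hX3pos : (0:ℝ) < (d * b3 / 2) / (B2 + A) := div_pos (by positivity) hBA
  have hX4pos : (0:ℝ) < (M / 2) / μ := div_pos (by linarith only [hMpos]) hμpos
  have hSpos : 0 < S := lt_min hδbar2 (lt_min one_pos (lt_min hX3pos hX4pos))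
  refine ⟨S / 2, by positivity, by linarith only [hS1, hδbar2], ?_⟩
  intro δ hδ0 hδlt
  have hδ2 : δ < δbar2 := by linarith only [hδlt, hS1, hδbar2]
  have hδ1 : δ ≤ 1 := by linarith only [hδlt, hS2]
  have hδB : δ * (B2 + A) ≤ d * b3 / 2 := by
    have h1 : δ ≤ (d * b3 / 2) / (B2 + A) := by linarith only [hδlt, hS3, hX3pos]
    exact (le_div_iff₀ hBA).mp h1
  have hδμ : δ * μ ≤ M / 2 := by
    have h1 : δ ≤ (M / 2) / μ := by linarith only [hδlt, hS4, hX4pos]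
    exact (le_div_iff₀ hμpos).mp h1
  have hrat : δ * μ / M ≤ 1 / 2 := by
    rw [div_le_iff₀ hMpos]
    linarith only [hδμ]
  have hr0 : (0:ℝ) ≤ 1 - δ * μ / M := by linarith only [hrat]
  refine ⟨M / m, δ * μ / M, div_pos hMpos hmpos, by positivity, ?_⟩
  intro χ w hχ0 hχrec hwrec
  have hDt : ∀ t, χ t ∈ D := by
    intro t
    induction t with
    | zero => exact hχ0
    | succ t ih => rw [hχrec]; exact hinv δ hδ0 hδ2 _ ih _
  -- generic bounds on the composite Lyapunov function
  have hWlow : ∀ z ∈ D, ∀ v : EuclideanSpace ℝ (Fin mm),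
      m * (‖z - χstar‖ ^ 2 + ‖v - h z‖ ^ 2) ≤ V z + d * U (v - h z) := by
    intro z hz v
    have h1 := (hV1 z hz).1
    have h2 := (hU1 (v - h z)).1
    have h3 : d * (b1 * ‖v - h z‖ ^ 2) ≤ d * U (v - h z) :=
      mul_le_mul_of_nonneg_left h2 hdpos.le
    have h4 : m ≤ c1 := min_le_left _ _
    have h5 : m ≤ d * b1 := min_le_right _ _
    linarith only [h1, h3,
      mul_nonneg (sub_nonneg.mpr h4) (sq_nonneg ‖z - χstar‖),
      mul_nonneg (sub_nonneg.mpr h5) (sq_nonneg ‖v - h z‖)]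
  have hWup : ∀ z ∈ D, ∀ v : EuclideanSpace ℝ (Fin mm),
      V z + d * U (v - h z) ≤ M * (‖z - χstar‖ ^ 2 + ‖v - h z‖ ^ 2) := by
    intro z hz v
    have h1 := (hV1 z hz).2
    have h2 := (hU1 (v - h z)).2
    have h3 : d * U (v - h z) ≤ d * (b2 * ‖v - h z‖ ^ 2) :=
      mul_le_mul_of_nonneg_left h2 hdpos.le
    have h4 : c2 ≤ M := le_max_left _ _
    have h5 : b2 ≤ M := le_max_right _ _
    linarith only [h1, h3,
      mul_nonneg (mul_nonneg (sub_nonneg.mpr hd1) hb2.le) (sq_nonneg ‖v - h z‖),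
      mul_nonneg (sub_nonneg.mpr h4) (sq_nonneg ‖z - χstar‖),
      mul_nonneg (sub_nonneg.mpr h5) (sq_nonneg ‖v - h z‖)]
  -- the one-step contraction
  have key : ∀ x ∈ D, ∀ y : EuclideanSpace ℝ (Fin mm),
      V (x + δ • f x y) + d * U (g y x - h (x + δ • f x y)) ≤
        (1 - δ * μ / M) * (V x + d * U (y - h x)) := by
    intro x hx y
    have hx1 : x + δ • f x y ∈ D := hinv δ hδ0 hδ2 x hx y
    have hP0 : (0:ℝ) ≤ ‖x - χstar‖ := norm_nonneg _
    have hQ0 : (0:ℝ) ≤ ‖y - h x‖ := norm_nonneg _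
    have hhx : ‖h x - h χstar‖ ≤ Lh * ‖x - χstar‖ := hhLip x hx χstar hχstar
    -- bound on f x y
    have hfb : ‖f x y‖ ≤ F * (‖x - χstar‖ + ‖y - h x‖) := by
      have h1 : ‖y - h χstar‖ ≤ ‖y - h x‖ + Lh * ‖x - χstar‖ := by
        have e : y - h χstar = (y - h x) + (h x - h χstar) := by abel
        rw [e]; exact (norm_add_le _ _).trans (by linarith only [hhx])
      have h2 := hfLip x hx χstar hχstar y (h χstar)
      rw [hfeq, sub_zero] at h2
      have h3 : Real.sqrt (‖x - χstar‖ ^ 2 + ‖y - h χstar‖ ^ 2) ≤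
          ‖x - χstar‖ + (‖y - h x‖ + Lh * ‖x - χstar‖) := by
        refine (Real.sqrt_le_sqrt ?_).trans
          (aux_sqrt_le hP0 (add_nonneg hQ0 (mul_nonneg hLh.le hP0)))
        nlinarith only [h1, norm_nonneg (y - h χstar)]
      calc ‖f x y‖ ≤ Lf * Real.sqrt (‖x - χstar‖ ^ 2 + ‖y - h χstar‖ ^ 2) := h2
        _ ≤ Lf * (‖x - χstar‖ + (‖y - h x‖ + Lh * ‖x - χstar‖)) :=
            mul_le_mul_of_nonneg_left h3 hLf.le
        _ ≤ F * (‖x - χstar‖ + ‖y - h x‖) := by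
            rw [hFdef]
            linarith only [mul_nonneg (mul_nonneg hLf.le hLh.le) hQ0]
    -- bound on f x (h x)
    have hfh : ‖f x (h x)‖ ≤ F * ‖x - χstar‖ := by
      have h2 := hfLip x hx χstar hχstar (h x) (h χstar)
      rw [hfeq, sub_zero] at h2
      have h3 : Real.sqrt (‖x - χstar‖ ^ 2 + ‖h x - h χstar‖ ^ 2) ≤
          ‖x - χstar‖ + Lh * ‖x - χstar‖ := by
        refine (Real.sqrt_le_sqrt ?_).trans (aux_sqrt_le hP0 (mul_nonneg hLh.le hP0))
        nlinarith only [hhx, norm_nonneg (h x - h χstar)]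
      calc ‖f x (h x)‖ ≤ Lf * Real.sqrt (‖x - χstar‖ ^ 2 + ‖h x - h χstar‖ ^ 2) := h2
        _ ≤ Lf * (‖x - χstar‖ + Lh * ‖x - χstar‖) := mul_le_mul_of_nonneg_left h3 hLf.le
        _ = F * ‖x - χstar‖ := by rw [hFdef]; ring
    -- Lipschitz in second argument
    have hfd : ‖f x y - f x (h x)‖ ≤ Lf * ‖y - h x‖ := by
      have h2 := hfLip x hx x hx y (h x)
      rw [sub_self, norm_zero] at h2
      rw [show (0:ℝ) ^ 2 + ‖y - h x‖ ^ 2 = ‖y - h x‖ ^ 2 by ring,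
        Real.sqrt_sq hQ0] at h2
      exact h2
    -- step size of slow variable
    have hχd : ‖δ • f x y‖ ≤ δ * (F * (‖x - χstar‖ + ‖y - h x‖)) := by
      rw [norm_smul, Real.norm_eq_abs, abs_of_pos hδ0]
      exact mul_le_mul_of_nonneg_left hfb hδ0.le
    -- drift of h
    have hhd : ‖h x - h (x + δ • f x y)‖ ≤ δ * E * (‖x - χstar‖ + ‖y - h x‖) := by
      have h1 := hhLip x hx (x + δ • f x y) hx1
      have e : ‖x - (x + δ • f x y)‖ = ‖δ • f x y‖ := by
        rw [show x - (x + δ • f x y) = -(δ • f x y) by abel, norm_neg]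
      rw [e] at h1
      calc ‖h x - h (x + δ • f x y)‖ ≤ Lh * ‖δ • f x y‖ := h1
        _ ≤ Lh * (δ * (F * (‖x - χstar‖ + ‖y - h x‖))) :=
            mul_le_mul_of_nonneg_left hχd hLh.le
        _ = δ * E * (‖x - χstar‖ + ‖y - h x‖) := by rw [hEdef]; ring
    -- boundary layer decrease
    have hBL : U (g y x - h x) - U (y - h x) ≤ -b3 * ‖y - h x‖ ^ 2 := by
      have h1 := hU2 x hx (y - h x)
      have e : y - h x + h x = y := by abel
      rw [e] at h1
      exact h1
    -- bound on the boundary-layer image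
    have hG : ‖g y x - h x‖ ≤ κ * ‖y - h x‖ := by
      have h1 := (hU1 (g y x - h x)).1
      have h2 := (hU1 (y - h x)).2
      have h3 : b1 * ‖g y x - h x‖ ^ 2 ≤ b2 * ‖y - h x‖ ^ 2 := by
        linarith only [h1, h2, hBL, mul_nonneg hb3.le (sq_nonneg ‖y - h x‖)]
      have h4 : ‖g y x - h x‖ ^ 2 ≤ b2 / b1 * ‖y - h x‖ ^ 2 := by
        rw [div_mul_eq_mul_div, le_div_iff₀ hb1]
        linarith only [h3]
      calc ‖g y x - h x‖ = Real.sqrt (‖g y x - h x‖ ^ 2) :=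
            (Real.sqrt_sq (norm_nonneg _)).symm
        _ ≤ Real.sqrt (b2 / b1 * ‖y - h x‖ ^ 2) := Real.sqrt_le_sqrt h4
        _ = κ * ‖y - h x‖ := by
            rw [Real.sqrt_mul (div_nonneg hb2.le hb1.le), Real.sqrt_sq hQ0, ← hκdef]
    -- norm of new fast error
    have hψn : ‖g y x - h (x + δ • f x y)‖ ≤
        κ * ‖y - h x‖ + δ * E * (‖x - χstar‖ + ‖y - h x‖) := by
      have e : g y x - h (x + δ • f x y) =
          (g y x - h x) + (h x - h (x + δ • f x y)) := by abel
      rw [e]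
      exact (norm_add_le _ _).trans (by linarith only [hG, hhd])
    -- U increment along h-drift
    have hUd : U (g y x - h (x + δ • f x y)) - U (g y x - h x) ≤
        b4 * (δ * E * (‖x - χstar‖ + ‖y - h x‖)) *
          ((κ * ‖y - h x‖ + δ * E * (‖x - χstar‖ + ‖y - h x‖)) + κ * ‖y - h x‖) := by
      have h1 := hU3 (g y x - h (x + δ • f x y)) (g y x - h x)
      have e : g y x - h (x + δ • f x y) - (g y x - h x) = h x - h (x + δ • f x y) := by
        abel
      rw [e] at h1
      refine (le_abs_self _).trans (h1.trans ?_)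
      have hb : (0:ℝ) ≤ b4 * (δ * E * (‖x - χstar‖ + ‖y - h x‖)) :=
        mul_nonneg hb4.le (mul_nonneg (mul_nonneg hδ0.le hEpos.le) (add_nonneg hP0 hQ0))
      exact mul_le_mul (mul_le_mul_of_nonneg_left hhd hb4.le)
        (by linarith only [hψn, hG]) (add_nonneg (norm_nonneg _) (norm_nonneg _)) hb
    -- total U decrement
    have hΔU : U (g y x - h (x + δ • f x y)) - U (y - h x) ≤
        -b3 * ‖y - h x‖ ^ 2 + δ * A * (‖x - χstar‖ ^ 2 + ‖y - h x‖ ^ 2) := by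
      have hSn : (0:ℝ) ≤ ‖x - χstar‖ + ‖y - h x‖ := add_nonneg hP0 hQ0
      have s1 : (κ * ‖y - h x‖ + δ * E * (‖x - χstar‖ + ‖y - h x‖)) + κ * ‖y - h x‖ ≤
          (2 * κ + E) * (‖x - χstar‖ + ‖y - h x‖) := by
        linarith only [mul_nonneg hκpos.le hP0,
          mul_nonneg (mul_nonneg (sub_nonneg.mpr hδ1) hEpos.le) hSn]
      have s2 : b4 * (δ * E * (‖x - χstar‖ + ‖y - h x‖)) *
            ((κ * ‖y - h x‖ + δ * E * (‖x - χstar‖ + ‖y - h x‖)) + κ * ‖y - h x‖) ≤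
          b4 * (δ * E * (‖x - χstar‖ + ‖y - h x‖)) *
            ((2 * κ + E) * (‖x - χstar‖ + ‖y - h x‖)) := by
        refine mul_le_mul_of_nonneg_left s1 ?_
        exact mul_nonneg hb4.le (mul_nonneg (mul_nonneg hδ0.le hEpos.le) hSn)
      have s3 : b4 * (δ * E * (‖x - χstar‖ + ‖y - h x‖)) *
            ((2 * κ + E) * (‖x - χstar‖ + ‖y - h x‖)) ≤
          δ * A * (‖x - χstar‖ ^ 2 + ‖y - h x‖ ^ 2) := by
        rw [hAdef]
        linarith only [mul_nonneg (mul_nonneg (mul_nonneg (mul_nonneg hδ0.le hb4.le)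
          hEpos.le) (by linarith only [hκpos, hEpos] : (0:ℝ) ≤ 2 * κ + E))
          (sq_nonneg (‖x - χstar‖ - ‖y - h x‖))]
      linarith only [hBL, hUd, s2, s3]
    -- V part
    have hVred := hV2 δ hδ0 hδ2 x hx
    have hyD : x + δ • f x (h x) ∈ D := hinv δ hδ0 hδ2 x hx (h x)
    have hyd : ‖(x + δ • f x y) - (x + δ • f x (h x))‖ ≤ δ * (Lf * ‖y - h x‖) := by
      have e : (x + δ • f x y) - (x + δ • f x (h x)) = δ • (f x y - f x (h x)) := by
        rw [smul_sub]; abel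
      rw [e, norm_smul, Real.norm_eq_abs, abs_of_pos hδ0]
      exact mul_le_mul_of_nonneg_left hfd hδ0.le
    have hx1n : ‖(x + δ • f x y) - χstar‖ ≤
        ‖x - χstar‖ + δ * (F * (‖x - χstar‖ + ‖y - h x‖)) := by
      have e : (x + δ • f x y) - χstar = (x - χstar) + δ • f x y := by abel
      rw [e]; exact (norm_add_le _ _).trans (by linarith only [hχd])
    have hyn : ‖(x + δ • f x (h x)) - χstar‖ ≤ ‖x - χstar‖ + δ * (F * ‖x - χstar‖) := by
      have e : (x + δ • f x (h x)) - χstar = (x - χstar) + δ • f x (h x) := by abel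
      have h1 : ‖δ • f x (h x)‖ ≤ δ * (F * ‖x - χstar‖) := by
        rw [norm_smul, Real.norm_eq_abs, abs_of_pos hδ0]
        exact mul_le_mul_of_nonneg_left hfh hδ0.le
      rw [e]; exact (norm_add_le _ _).trans (by linarith only [h1])
    have hVd : V (x + δ • f x y) - V (x + δ • f x (h x)) ≤
        c4 * (δ * (Lf * ‖y - h x‖)) *
          ((2 + 2 * F) * (‖x - χstar‖ + ‖y - h x‖)) := by
      have h1 := hV3 (x + δ • f x y) hx1 (x + δ • f x (h x)) hyD
      refine (le_abs_self _).trans (h1.trans ?_)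
      have hsum : ‖(x + δ • f x y) - χstar‖ + ‖(x + δ • f x (h x)) - χstar‖ ≤
          (2 + 2 * F) * (‖x - χstar‖ + ‖y - h x‖) := by
        linarith only [hx1n, hyn, hQ0,
          mul_nonneg (mul_nonneg (sub_nonneg.mpr hδ1) hFpos.le) (add_nonneg hP0 hQ0),
          mul_nonneg (mul_nonneg (sub_nonneg.mpr hδ1) hFpos.le) hP0,
          mul_nonneg hFpos.le hQ0]
      exact mul_le_mul (mul_le_mul_of_nonneg_left hyd hc4.le) hsum
        (add_nonneg (norm_nonneg _) (norm_nonneg _))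
        (mul_nonneg hc4.le (mul_nonneg hδ0.le (mul_nonneg hLf.le hQ0)))
    have hVd2 : c4 * (δ * (Lf * ‖y - h x‖)) *
          ((2 + 2 * F) * (‖x - χstar‖ + ‖y - h x‖)) ≤
        δ * (c3 / 2) * ‖x - χstar‖ ^ 2 + δ * B2 * ‖y - h x‖ ^ 2 := by
      have hkey : Bc * ‖y - h x‖ * ‖x - χstar‖ ≤
          c3 / 2 * ‖x - χstar‖ ^ 2 + Bc ^ 2 / (2 * c3) * ‖y - h x‖ ^ 2 := by
        have e : c3 / 2 * ‖x - χstar‖ ^ 2 + Bc ^ 2 / (2 * c3) * ‖y - h x‖ ^ 2 -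
            Bc * ‖y - h x‖ * ‖x - χstar‖ =
            (c3 * ‖x - χstar‖ - Bc * ‖y - h x‖) ^ 2 / (2 * c3) := by
          field_simp
          ring
        linarith only [e, div_nonneg (sq_nonneg (c3 * ‖x - χstar‖ - Bc * ‖y - h x‖))
          (by linarith only [hc3] : (0:ℝ) ≤ 2 * c3)]
      have e1 : c4 * (δ * (Lf * ‖y - h x‖)) *
          ((2 + 2 * F) * (‖x - χstar‖ + ‖y - h x‖)) =
          δ * (Bc * ‖y - h x‖ * ‖x - χstar‖) + δ * Bc * ‖y - h x‖ ^ 2 := by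
        rw [hBcdef]; ring
      have e2 : δ * B2 * ‖y - h x‖ ^ 2 =
          δ * (Bc ^ 2 / (2 * c3) * ‖y - h x‖ ^ 2) + δ * Bc * ‖y - h x‖ ^ 2 := by
        rw [hB2def]; ring
      rw [e1, e2]
      have h9 := mul_le_mul_of_nonneg_left hkey hδ0.le
      linarith only [h9]
    have hΔV : V (x + δ • f x y) - V x ≤
        -(δ * (c3 / 2)) * ‖x - χstar‖ ^ 2 + δ * B2 * ‖y - h x‖ ^ 2 := by
      linarith only [hVred, hVd, hVd2]
    -- composite decrement
    have hΔU' : d * U (g y x - h (x + δ • f x y)) - d * U (y - h x) ≤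
        d * (-b3 * ‖y - h x‖ ^ 2 + δ * A * (‖x - χstar‖ ^ 2 + ‖y - h x‖ ^ 2)) := by
      have h1 := mul_le_mul_of_nonneg_left hΔU hdpos.le
      linarith only [h1]
    have coP : d * (δ * A * ‖x - χstar‖ ^ 2) ≤ δ * (c3 / 4) * ‖x - χstar‖ ^ 2 := by
      linarith only [mul_nonneg (sub_nonneg.mpr hdA)
        (mul_nonneg hδ0.le (sq_nonneg ‖x - χstar‖))]
    have p1 : δ * (B2 + A) * ‖y - h x‖ ^ 2 ≤ (d * b3 / 2) * ‖y - h x‖ ^ 2 :=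
      mul_le_mul_of_nonneg_right hδB (sq_nonneg _)
    have p2 : (0:ℝ) ≤ (1 - d) * (δ * A * ‖y - h x‖ ^ 2) :=
      mul_nonneg (sub_nonneg.mpr hd1)
        (mul_nonneg (mul_nonneg hδ0.le hApos.le) (sq_nonneg _))
    have p3 : (0:ℝ) ≤ (1 - δ) * (μ * ‖y - h x‖ ^ 2) :=
      mul_nonneg (sub_nonneg.mpr hδ1) (mul_nonneg hμpos.le (sq_nonneg _))
    have p4 : μ * ‖y - h x‖ ^ 2 ≤ (d * b3 / 2) * ‖y - h x‖ ^ 2 :=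
      mul_le_mul_of_nonneg_right hμ2 (sq_nonneg _)
    have p5 : δ * μ * ‖x - χstar‖ ^ 2 ≤ δ * (c3 / 4) * ‖x - χstar‖ ^ 2 :=
      mul_le_mul_of_nonneg_right (mul_le_mul_of_nonneg_left hμ1 hδ0.le) (sq_nonneg _)
    have hsum : (V (x + δ • f x y) + d * U (g y x - h (x + δ • f x y))) -
        (V x + d * U (y - h x)) ≤
        -(δ * μ) * (‖x - χstar‖ ^ 2 + ‖y - h x‖ ^ 2) := by
      linarith only [hΔV, hΔU', coP, p1, p2, p3, p4, p5]
    have hWub := hWup x hx y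
    have hμM : δ * μ / M * (V x + d * U (y - h x)) ≤
        δ * μ * (‖x - χstar‖ ^ 2 + ‖y - h x‖ ^ 2) := by
      have h1 := mul_le_mul_of_nonneg_left hWub
        (div_nonneg (mul_nonneg hδ0.le hμpos.le) hMpos.le)
      have e : δ * μ / M * (M * (‖x - χstar‖ ^ 2 + ‖y - h x‖ ^ 2)) =
          δ * μ * (‖x - χstar‖ ^ 2 + ‖y - h x‖ ^ 2) := by
        field_simp
      linarith only [h1, e]
    have e : (1 - δ * μ / M) * (V x + d * U (y - h x)) =
        (V x + d * U (y - h x)) - δ * μ / M * (V x + d * U (y - h x)) := by ring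
    rw [e]
    linarith only [hsum, hμM]
  -- iterate the contraction
  have hWexp : ∀ t, V (χ t) + d * U (w t - h (χ t)) ≤
      (1 - δ * μ / M) ^ t * (V (χ 0) + d * U (w 0 - h (χ 0))) := by
    intro t
    induction t with
    | zero => simp
    | succ t ih =>
      have hstep := key (χ t) (hDt t) (w t)
      rw [← hχrec t, ← hwrec t] at hstep
      calc V (χ (t + 1)) + d * U (w (t + 1) - h (χ (t + 1))) ≤
          (1 - δ * μ / M) * (V (χ t) + d * U (w t - h (χ t))) := hstep
        _ ≤ (1 - δ * μ / M) * ((1 - δ * μ / M) ^ t *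
            (V (χ 0) + d * U (w 0 - h (χ 0)))) := mul_le_mul_of_nonneg_left ih hr0
        _ = (1 - δ * μ / M) ^ (t + 1) * (V (χ 0) + d * U (w 0 - h (χ 0))) := by ring
  intro t
  have h1 := hWexp t
  have hlow := hWlow (χ t) (hDt t) (w t)
  have hup0 := hWup (χ 0) hχ0 (w 0)
  have hW0nn : (0:ℝ) ≤ V (χ 0) + d * U (w 0 - h (χ 0)) := by
    have h2 := hWlow (χ 0) hχ0 (w 0)
    linarith only [h2, mul_nonneg hmpos.le
      (add_nonneg (sq_nonneg ‖χ 0 - χstar‖) (sq_nonneg ‖w 0 - h (χ 0)‖))]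
  have hrpow : (1 - δ * μ / M) ^ t ≤ Real.exp (-(δ * μ / M) * t) := by
    have h2 : (1 - δ * μ / M) ≤ Real.exp (-(δ * μ / M)) := by
      have h3 := Real.add_one_le_exp (-(δ * μ / M))
      linarith only [h3]
    calc (1 - δ * μ / M) ^ t ≤ (Real.exp (-(δ * μ / M))) ^ t := pow_le_pow_left₀ hr0 h2 t
      _ = Real.exp (-(δ * μ / M) * t) := by
        rw [← Real.exp_nat_mul, mul_comm]
  have h2 : (1 - δ * μ / M) ^ t * (V (χ 0) + d * U (w 0 - h (χ 0))) ≤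
      Real.exp (-(δ * μ / M) * t) * (V (χ 0) + d * U (w 0 - h (χ 0))) :=
    mul_le_mul_of_nonneg_right hrpow hW0nn
  have h3 : Real.exp (-(δ * μ / M) * t) * (V (χ 0) + d * U (w 0 - h (χ 0))) ≤
      Real.exp (-(δ * μ / M) * t) *
        (M * (‖χ 0 - χstar‖ ^ 2 + ‖w 0 - h (χ 0)‖ ^ 2)) :=
    mul_le_mul_of_nonneg_left hup0 (Real.exp_nonneg _)
  rw [div_mul_eq_mul_div, div_mul_eq_mul_div, le_div_iff₀ hmpos]
  linarith only [h1, h2, h3, hlow]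
end
end
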